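/- Let ε ≥ 0 and suppose there are at least two distinct bid bundles. The set of price-bid pairings {(p_t, x_t) : 1 ≤ t ≤ T} admits an individually rational ε-approximate virtual valuation function if and only if it satisfies the relaxed GARP-based bidding rule, i.e., for every k ≥ 1 and every sequence of observation indices t_0, t_1, …, t_k whose bid bundles are pairwise distinct, (p_{t_k} − p_{t_0})·x_{t_0} ≥ Σ_{i=1}^{k} (p_{t_i} − p_{t_{i−1}})·x_{t_i} − (k+1)·ε. -/

import Mathlib

open Finset

/-- Euclidean inner product on `ℝⁿ`. -/
def dotp {n : ℕ} (p y : Fin n → ℝ) : ℝ := ∑ i, p i * y i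

/-- A bundle is a 0-1 vector. -/
def IsBundle {n : ℕ} (y : Fin n → ℝ) : Prop := ∀ i, y i = 0 ∨ y i = 1

/-- The cyclically next index in `Fin m`. -/
def cnext {m : ℕ} (i : Fin m) : Fin m := ⟨(i.val + 1) % m, Nat.mod_lt _ i.pos⟩

-- The length of the arc of the bidding graph from bid bundle `x t` to bundle `y`:
-- the minimum of `p s · (y - x t)` over all observations `s` bidding the same bundle as `t`.
open Classical in
noncomputable def arcLen {n T : ℕ} (p x : Fin T → Fin n → ℝ) (t : Fin T)
    (y : Fin n → ℝ) : ℝ :=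
  (Finset.univ.filter fun s => x s = x t).inf' ⟨t, by simp⟩
    (fun s => dotp (p s) (y - x t))

/-- `v` is an `ε`-approximate virtual valuation function for the data `(p, x)`. -/
def IsApproxVV  {n T : ℕ} (p x : Fin T → Fin n → ℝ) (ε : ℝ)
    (v : (Fin n → ℝ) → ℝ) : Prop :=
  ∀ t : Fin T, ∀ y : Fin n → ℝ, IsBundle y →
    v (x t) - dotp (p t) (x t) ≥ v y - dotp (p t) y - ε

/-- `v` is individually rational for the data `(p, x)`. -/
def IndivRational {n T : ℕ} (p x : Fin T → Fin n → ℝ)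
    (v : (Fin n → ℝ) → ℝ) : Prop :=
  ∀ t : Fin T, v (x t) ≥ dotp (p t) (x t)

/-- The set of mean lengths of cycles of the bidding graph. -/
noncomputable def meanCycleLens {n T : ℕ} (p x : Fin T → Fin n → ℝ) : Set ℝ :=
  {r | ∃ m : ℕ, 2 ≤ m ∧ ∃ c : Fin m → Fin T,
      Function.Injective (fun i => x (c i)) ∧
      r = (∑ i : Fin m, arcLen p x (c i) (x (c (cnext i)))) / m}

lemma dotp_sub_right {n : ℕ} (p y z : Fin n → ℝ) : dotp p (y - z) = dotp p y - dotp p z := by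
  simp [dotp, mul_sub, Finset.sum_sub_distrib]

lemma dotp_sub_left {n : ℕ} (a b y : Fin n → ℝ) : dotp (a - b) y = dotp a y - dotp b y := by
  simp [dotp, sub_mul, Finset.sum_sub_distrib]

lemma telescope {k : ℕ} (g : Fin (k + 1) → ℝ) :
    ∑ i : Fin k, (g i.succ - g i.castSucc) = g (Fin.last k) - g 0 := by
  have h1 := Fin.sum_univ_castSucc (f := g)
  have h2 := Fin.sum_univ_succ (f := g)
  rw [Finset.sum_sub_distrib]
  linarith [h1, h2]

lemma alg {n T k : ℕ} (p x : Fin T → Fin n → ℝ) (t : Fin (k + 1) → Fin T) :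
    (∑ i : Fin k, dotp (p (t i.castSucc)) (x (t i.succ) - x (t i.castSucc)))
      + dotp (p (t (Fin.last k))) (x (t 0) - x (t (Fin.last k)))
    = dotp (p (t (Fin.last k)) - p (t 0)) (x (t 0))
      - ∑ i : Fin k, dotp (p (t i.succ) - p (t i.castSucc)) (x (t i.succ)) := by
  simp only [dotp_sub_right, dotp_sub_left, Finset.sum_sub_distrib]
  have h1 := Fin.sum_univ_castSucc (f := fun i => dotp (p (t i)) (x (t i)))
  have h2 := Fin.sum_univ_succ (f := fun i => dotp (p (t i)) (x (t i)))
  linarith [h1, h2]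

lemma cnext_castSucc {m : ℕ} (i : Fin m) : cnext i.castSucc = i.succ := by
  apply Fin.ext
  simp only [cnext, Fin.coe_castSucc, Fin.val_succ]
  exact Nat.mod_eq_of_lt (by omega)

lemma cnext_last {m : ℕ} : cnext (Fin.last m) = 0 := by
  apply Fin.ext
  simp [cnext]

lemma arcLen_self {n T : ℕ} (p x : Fin T → Fin n → ℝ) (t : Fin T) :
    arcLen p x t (x t) = 0 := by
  have h : (fun s => dotp (p s) (x t - x t)) = fun _ : Fin T => (0 : ℝ) := by
    funext s; simp [dotp]
  simp only [arcLen, h, Finset.inf'_const]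
  exact Finset.inf'_const _ _

lemma arcLen_congr {n T : ℕ} (p x : Fin T → Fin n → ℝ) {s s' : Fin T} (h : x s = x s')
    (y : Fin n → ℝ) : arcLen p x s y = arcLen p x s' y := by
  simp only [arcLen, h]

lemma arcLen_exists {n T : ℕ} (p x : Fin T → Fin n → ℝ) (t : Fin T) (y : Fin n → ℝ) :
    ∃ u : Fin T, x u = x t ∧ arcLen p x t y = dotp (p u) (y - x t) := by
  obtain ⟨u, hu, he⟩ := Finset.exists_mem_eq_inf'
    (⟨t, by simp⟩ : (Finset.univ.filter fun s => x s = x t).Nonempty)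
    (fun s => dotp (p s) (y - x t))
  exact ⟨u, (Finset.mem_filter.mp hu).2, he⟩

lemma arcLen_le_self {n T : ℕ} (p x : Fin T → Fin n → ℝ) (t : Fin T) (y : Fin n → ℝ) :
    arcLen p x t y ≤ dotp (p t) (y - x t) :=
  Finset.inf'_le _ (by simp)

noncomputable def wgt {n T : ℕ} (p x : Fin T → Fin n → ℝ) (ε : ℝ) (s t : Fin T) : ℝ :=
  arcLen p x s (x t) + ε

lemma wgt_congr {n T : ℕ} (p x : Fin T → Fin n → ℝ) (ε : ℝ) {s s' t t' : Fin T}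
    (hs : x s = x s') (ht : x t = x t') : wgt p x ε s t = wgt p x ε s' t' := by
  unfold wgt
  rw [arcLen_congr p x hs, ht]

lemma cycle_nonneg {n T : ℕ} (p x : Fin T → Fin n → ℝ) (ε : ℝ) (hε : 0 ≤ ε)
    (garp : ∀ k : ℕ, 1 ≤ k → ∀ t : Fin (k + 1) → Fin T,
      Function.Injective (fun i => x (t i)) →
      dotp (p (t (Fin.last k)) - p (t 0)) (x (t 0)) ≥
        (∑ i : Fin k, dotp (p (t i.succ) - p (t i.castSucc)) (x (t i.succ)))
          - (k + 1) * ε)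
    (m : ℕ) (e : Fin (m + 1) → Fin T) (he : Function.Injective fun i => x (e i)) :
    0 ≤ ∑ i : Fin (m + 1), wgt p x ε (e i) (e (cnext i)) := by
  rcases Nat.eq_zero_or_pos m with hm | hm
  · subst hm
    have hc : cnext (0 : Fin 1) = 0 := rfl
    simp [Fin.sum_univ_one, hc, wgt, arcLen_self, hε]
  · choose u hu1 hu2 using fun i => arcLen_exists p x (e i) (x (e (cnext i)))
    have hinj : Function.Injective fun i => x (u i) := by
      have hfe : (fun i => x (u i)) = fun i => x (e i) := funext fun i => hu1 i
      rw [hfe]; exact he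
    have hg := garp m hm u hinj
    have hterm : ∀ i : Fin (m + 1), wgt p x ε (e i) (e (cnext i))
        = dotp (p (u i)) (x (u (cnext i)) - x (u i)) + ε := by
      intro i
      rw [wgt, hu2 i, hu1 i, hu1 (cnext i)]
    have hsum : ∑ i : Fin (m + 1), wgt p x ε (e i) (e (cnext i))
        = (∑ i : Fin m, dotp (p (u i.castSucc)) (x (u i.succ) - x (u i.castSucc)))
          + dotp (p (u (Fin.last m))) (x (u 0) - x (u (Fin.last m))) + (m + 1) * ε := by
      rw [Finset.sum_congr rfl (fun i _ => hterm i), Finset.sum_add_distrib,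
        Fin.sum_univ_castSucc (f := fun i => dotp (p (u i)) (x (u (cnext i)) - x (u i)))]
      simp only [cnext_castSucc, cnext_last, Finset.sum_const, Finset.card_univ,
        Fintype.card_fin, nsmul_eq_mul]
      push_cast
      ring
    have halg := alg p x u
    rw [hsum]
    push_cast at hg
    linarith [halg, hg]

noncomputable def pset {n T : ℕ} (x : Fin T → Fin n → ℝ) (m : ℕ) (t : Fin T) :
    Finset (Fin (m + 1) → Fin T) :=
  Finset.univ.filter fun c =>
    Function.Injective (fun i => x (c i)) ∧ x (c (Fin.last m)) = x t

noncomputable def pathLen {n T : ℕ} (p x : Fin T → Fin n → ℝ) (ε : ℝ) {m : ℕ}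
    (c : Fin (m + 1) → Fin T) : ℝ :=
  ∑ i : Fin m, wgt p x ε (c i.castSucc) (c i.succ)

noncomputable def pEval {n T : ℕ} (p x : Fin T → Fin n → ℝ) (ε : ℝ) (m : ℕ) (t : Fin T) : ℝ :=
  if h : (pset x m t).Nonempty then (pset x m t).inf' h (pathLen p x ε) else 0

noncomputable def phi {n T : ℕ} (p x : Fin T → Fin n → ℝ) (ε : ℝ) (t : Fin T) : ℝ :=
  (Finset.range (T + 1)).inf' ⟨0, by simp⟩ (fun m => pEval p x ε m t)

lemma const_mem_pset {n T : ℕ} (x : Fin T → Fin n → ℝ) (t : Fin T) :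
    (fun _ => t : Fin 1 → Fin T) ∈ pset x 0 t := by
  refine Finset.mem_filter.mpr ⟨Finset.mem_univ _, ?_, rfl⟩
  exact fun a b _ => Fin.ext (by omega)

lemma pathLen_const {n T : ℕ} (p x : Fin T → Fin n → ℝ) (ε : ℝ) (t : Fin T) :
    pathLen p x ε (fun _ => t : Fin 1 → Fin T) = 0 := by
  simp [pathLen]

lemma phi_le_pathLen {n T : ℕ} (p x : Fin T → Fin n → ℝ) (ε : ℝ) {m : ℕ} (hm : m ≤ T)
    {t : Fin T} {c : Fin (m + 1) → Fin T} (hc : c ∈ pset x m t) :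
    phi p x ε t ≤ pathLen p x ε c := by
  have h1 : phi p x ε t ≤ pEval p x ε m t :=
    Finset.inf'_le _ (by simp only [Finset.mem_range]; omega)
  have h2 : pEval p x ε m t ≤ pathLen p x ε c := by
    rw [pEval, dif_pos ⟨c, hc⟩]; exact Finset.inf'_le _ hc
  linarith

lemma exists_path_phi {n T : ℕ} (p x : Fin T → Fin n → ℝ) (ε : ℝ) (t : Fin T) :
    ∃ m, m ≤ T ∧ ∃ c ∈ pset x m t, pathLen p x ε c ≤ phi p x ε t := by
  obtain ⟨m, hm, he⟩ := Finset.exists_mem_eq_inf'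
    (⟨0, by simp⟩ : (Finset.range (T + 1)).Nonempty) (fun m => pEval p x ε m t)
  simp only [Finset.mem_range] at hm
  have he' : phi p x ε t = pEval p x ε m t := he
  by_cases hne : (pset x m t).Nonempty
  · obtain ⟨c, hc, hc2⟩ := Finset.exists_mem_eq_inf' hne (pathLen p x ε)
    refine ⟨m, by omega, c, hc, ?_⟩
    rw [he', pEval, dif_pos hne, ← hc2]
  · have h0 : phi p x ε t = 0 := by rw [he', pEval, dif_neg hne]
    refine ⟨0, by omega, _, const_mem_pset x t, ?_⟩
    rw [pathLen_const, h0]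

lemma wgt_congr_idx {n T : ℕ} (p x : Fin T → Fin n → ℝ) (ε : ℝ) {M : ℕ} (c : Fin M → Fin T)
    {a a' b b' : Fin M} (ha : a.val = a'.val) (hb : b.val = b'.val) :
    wgt p x ε (c a) (c b) = wgt p x ε (c a') (c b') := by
  rw [Fin.ext ha, Fin.ext hb]

lemma phi_triangle {n T : ℕ} (p x : Fin T → Fin n → ℝ) (ε : ℝ) (hε : 0 ≤ ε)
    (garp : ∀ k : ℕ, 1 ≤ k → ∀ t : Fin (k + 1) → Fin T,
      Function.Injective (fun i => x (t i)) →
      dotp (p (t (Fin.last k)) - p (t 0)) (x (t 0)) ≥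
        (∑ i : Fin k, dotp (p (t i.succ) - p (t i.castSucc)) (x (t i.succ)))
          - (k + 1) * ε)
    (s t : Fin T) :
    phi p x ε t ≤ phi p x ε s + wgt p x ε s t := by
  classical
  obtain ⟨m, hmT, c, hc, hlen⟩ := exists_path_phi p x ε s
  rw [pset, Finset.mem_filter] at hc
  obtain ⟨-, hcinj, hclast⟩ := hc
  by_cases hit : ∃ i : Fin (m + 1), x (c i) = x t
  · obtain ⟨i, hi⟩ := hit
    have hjm : i.val ≤ m := Nat.lt_succ_iff.mp i.isLt
    set j := i.val with hj
    -- the prefix path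
    set c' : Fin (j + 1) → Fin T := fun l => c (Fin.castLE (by omega) l) with hc'def
    have hc' : c' ∈ pset x j t := by
      refine Finset.mem_filter.mpr ⟨Finset.mem_univ _, ?_, ?_⟩
      · intro a b hab
        have h2 := hcinj hab
        exact Fin.castLE_injective _ h2
      · have hidx : Fin.castLE (by omega : j + 1 ≤ m + 1) (Fin.last j) = i :=
          Fin.ext (by simp [hj])
        rw [hc'def]
        simp only [hidx]
        exact hi
    -- the cycle
    set e : Fin (m - j + 1) → Fin T := fun l => c ⟨j + l.val, by omega⟩ with hedef
    have heinj : Function.Injective fun l => x (e l) := by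
      intro a b hab
      have h2 := congrArg Fin.val (hcinj hab)
      simp only at h2
      exact Fin.ext (by omega)
    have hcyc := cycle_nonneg p x ε hε garp (m - j) e heinj
    -- edge weights as a function of ℕ
    set F : ℕ → ℝ := fun l =>
      if h : l + 1 ≤ m then wgt p x ε (c ⟨l, by omega⟩) (c ⟨l + 1, by omega⟩) else 0
      with hFdef
    have h1 : pathLen p x ε c = ∑ l ∈ Finset.range m, F l := by
      rw [← Fin.sum_univ_eq_sum_range F m, pathLen]
      refine Finset.sum_congr rfl fun l _ => ?_
      simp only [hFdef]
      have hl : l.val + 1 ≤ m := l.isLt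
      rw [dif_pos hl]
      exact wgt_congr_idx p x ε c (by simp only [Fin.coe_castLE, Fin.val_succ, Fin.coe_castSucc, Fin.val_last, Fin.val_zero] <;> omega) (by simp only [Fin.coe_castLE, Fin.val_succ, Fin.coe_castSucc, Fin.val_last, Fin.val_zero] <;> omega)
    have h2 : pathLen p x ε c' = ∑ l ∈ Finset.range j, F l := by
      rw [← Fin.sum_univ_eq_sum_range F j, pathLen]
      refine Finset.sum_congr rfl fun l _ => ?_
      simp only [hFdef, hc'def]
      have hl : l.val + 1 ≤ m := by omega
      rw [dif_pos hl]
      exact wgt_congr_idx p x ε c (by simp only [Fin.coe_castLE, Fin.val_succ, Fin.coe_castSucc, Fin.val_last, Fin.val_zero] <;> omega) (by simp only [Fin.coe_castLE, Fin.val_succ, Fin.coe_castSucc, Fin.val_last, Fin.val_zero] <;> omega)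
    have h3 : ∑ l : Fin (m - j + 1), wgt p x ε (e l) (e (cnext l))
        = (∑ l ∈ Finset.range (m - j), F (j + l)) + wgt p x ε (c (Fin.last m)) (c i) := by
      rw [Fin.sum_univ_castSucc
        (f := fun l : Fin (m - j + 1) => wgt p x ε (e l) (e (cnext l)))]
      congr 1
      · rw [← Fin.sum_univ_eq_sum_range (fun l => F (j + l)) (m - j)]
        refine Finset.sum_congr rfl fun l _ => ?_
        rw [cnext_castSucc]
        simp only [hFdef, hedef]
        have hl : j + l.val + 1 ≤ m := by omega
        rw [dif_pos hl]
        exact wgt_congr_idx p x ε c (by simp only [Fin.coe_castLE, Fin.val_succ, Fin.coe_castSucc, Fin.val_last, Fin.val_zero] <;> omega) (by simp only [Fin.coe_castLE, Fin.val_succ, Fin.coe_castSucc, Fin.val_last, Fin.val_zero] <;> omega)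
      · rw [cnext_last]
        simp only [hedef]
        have ha : (⟨j + (Fin.last (m - j)).val, by omega⟩ : Fin (m + 1)) = Fin.last m :=
          Fin.ext (by simp; omega)
        have hb : (⟨j + (0 : Fin (m - j + 1)).val, by omega⟩ : Fin (m + 1)) = i :=
          Fin.ext (by simp [hj])
        rw [ha, hb]
    have h4 : ∑ l ∈ Finset.range m, F l
        = (∑ l ∈ Finset.range j, F l) + ∑ l ∈ Finset.range (m - j), F (j + l) := by
      rw [← Finset.sum_Ico_eq_sum_range (f := F) (m := j) (n := m),
        Finset.range_eq_Ico, Finset.range_eq_Ico]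
      exact (Finset.sum_Ico_consecutive F (Nat.zero_le j) hjm).symm
    have hw1 : wgt p x ε (c (Fin.last m)) (c i) = wgt p x ε s t :=
      wgt_congr p x ε hclast hi
    have h5 := phi_le_pathLen p x ε (le_trans hjm hmT) hc'
    rw [h3, hw1] at hcyc
    rw [h1, h4] at hlen
    rw [h2] at h5
    linarith
  · push_neg at hit
    set c' : Fin (m + 1 + 1) → Fin T := Fin.snoc c t with hc'def
    have hinj' : Function.Injective fun i => x (c' i) := by
      intro a b hab
      rcases Fin.eq_castSucc_or_eq_last a with ⟨a', rfl⟩ | rfl <;>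
        rcases Fin.eq_castSucc_or_eq_last b with ⟨b', rfl⟩ | rfl
      · simp only [hc'def, Fin.snoc_castSucc] at hab
        exact congrArg Fin.castSucc (hcinj hab)
      · simp only [hc'def, Fin.snoc_castSucc, Fin.snoc_last] at hab
        exact absurd hab (hit a')
      · simp only [hc'def, Fin.snoc_castSucc, Fin.snoc_last] at hab
        exact absurd hab.symm (hit b')
      · rfl
    have hm2 : m + 1 ≤ T := by
      have hcard1 : (Finset.univ.image fun i : Fin (m + 2) => x (c' i)).card = m + 2 := by
        rw [Finset.card_image_of_injective _ hinj', Finset.card_univ, Fintype.card_fin]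
      have hsub : (Finset.univ.image fun i : Fin (m + 2) => x (c' i))
          ⊆ Finset.univ.image x := by
        intro y hy
        simp only [Finset.mem_image, Finset.mem_univ, true_and] at hy ⊢
        obtain ⟨i, hi⟩ := hy
        exact ⟨c' i, hi⟩
      have h3 := Finset.card_le_card hsub
      have h4 : (Finset.univ.image x).card ≤ T :=
        le_trans Finset.card_image_le (by simp)
      omega
    have hc'mem : c' ∈ pset x (m + 1) t := by
      refine Finset.mem_filter.mpr ⟨Finset.mem_univ _, hinj', ?_⟩
      rw [hc'def]
      simp [Fin.snoc_last]
    have hlen' : pathLen p x ε c' = pathLen p x ε c + wgt p x ε (c (Fin.last m)) t := by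
      rw [pathLen, Fin.sum_univ_castSucc
        (f := fun i : Fin (m + 1) => wgt p x ε (c' i.castSucc) (c' i.succ))]
      congr 1
      · refine Finset.sum_congr rfl fun l _ => ?_
        rw [hc'def]
        rw [show (l.castSucc.succ : Fin (m + 2)) = l.succ.castSucc from Fin.succ_castSucc l]
        rw [Fin.snoc_castSucc, Fin.snoc_castSucc]
      · rw [hc'def]
        rw [show ((Fin.last m).succ : Fin (m + 2)) = Fin.last (m + 1) from Fin.succ_last m]
        rw [Fin.snoc_castSucc, Fin.snoc_last]
    have h5 := phi_le_pathLen p x ε hm2 hc'mem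
    have hw : wgt p x ε (c (Fin.last m)) t = wgt p x ε s t :=
      wgt_congr p x ε hclast rfl
    rw [hlen', hw] at h5
    linarith

/-- There exists an individually rational `ε`-approximate virtual valuation
function if and only if the relaxed GARP-based bidding rule is satisfied. -/
theorem indivRational_approxVV_iff_relaxed_garp {n T : ℕ}
    (p x : Fin T → Fin n → ℝ)
    (hp : ∀ t i, 0 ≤ p t i) (hx : ∀ t, IsBundle (x t))
    (hdist : ∃ s t : Fin T, x s ≠ x t)
    (ε : ℝ) (hε : 0 ≤ ε) :
    (∃ v : (Fin n → ℝ) → ℝ, IsApproxVV p x ε v ∧ IndivRational p x v)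
    ↔
    (∀ k : ℕ, 1 ≤ k → ∀ t : Fin (k + 1) → Fin T,
      Function.Injective (fun i => x (t i)) →
      dotp (p (t (Fin.last k)) - p (t 0)) (x (t 0)) ≥
        (∑ i : Fin k, dotp (p (t i.succ) - p (t i.castSucc)) (x (t i.succ)))
          - (k + 1) * ε) := by
  constructor
  · rintro ⟨v, hv, hir⟩ k hk t hinj
    have hedge : ∀ i : Fin k, v (x (t i.succ)) - v (x (t i.castSucc))
        ≤ dotp (p (t i.castSucc)) (x (t i.succ) - x (t i.castSucc)) + ε := by
      intro i
      have h := hv (t i.castSucc) (x (t i.succ)) (hx _)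
      rw [dotp_sub_right]
      linarith
    have hlast : v (x (t 0)) - v (x (t (Fin.last k)))
        ≤ dotp (p (t (Fin.last k))) (x (t 0) - x (t (Fin.last k))) + ε := by
      have h := hv (t (Fin.last k)) (x (t 0)) (hx _)
      rw [dotp_sub_right]
      linarith
    have hTel := telescope (fun j => v (x (t j)))
    have hS : ∑ i : Fin k, (v (x (t i.succ)) - v (x (t i.castSucc)))
        ≤ ∑ i : Fin k, (dotp (p (t i.castSucc)) (x (t i.succ) - x (t i.castSucc)) + ε) :=
      Finset.sum_le_sum fun i _ => hedge i
    have hsplit : ∑ i : Fin k, (dotp (p (t i.castSucc)) (x (t i.succ) - x (t i.castSucc)) + ε)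
        = (∑ i : Fin k, dotp (p (t i.castSucc)) (x (t i.succ) - x (t i.castSucc))) + k * ε := by
      rw [Finset.sum_add_distrib, Finset.sum_const, Finset.card_univ, Fintype.card_fin,
        nsmul_eq_mul]
    have halg := alg p x t
    linarith
  · intro garp
    obtain ⟨s₀, t₀, hst⟩ := hdist
    have htri : ∀ a b : Fin T, phi p x ε b ≤ phi p x ε a + wgt p x ε a b :=
      fun a b => phi_triangle p x ε hε garp a b
    set C : ℝ := Finset.univ.sup' ⟨s₀, Finset.mem_univ _⟩
      (fun u => dotp (p u) (x u) - phi p x ε u) with hC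
    refine ⟨fun y => Finset.univ.inf' ⟨s₀, Finset.mem_univ _⟩
      (fun u => phi p x ε u + C + arcLen p x u y + ε), ?_, ?_⟩
    · intro t y _
      have hvx : phi p x ε t + C ≤ Finset.univ.inf' ⟨s₀, Finset.mem_univ _⟩
          (fun u => phi p x ε u + C + arcLen p x u (x t) + ε) := by
        apply Finset.le_inf'
        intro u _
        have h := htri u t
        rw [wgt] at h
        linarith
      have hvy : Finset.univ.inf' ⟨s₀, Finset.mem_univ _⟩
          (fun u => phi p x ε u + C + arcLen p x u y + ε)
          ≤ phi p x ε t + C + arcLen p x t y + ε :=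
        Finset.inf'_le _ (Finset.mem_univ t)
      have h2 := arcLen_le_self p x t y
      rw [dotp_sub_right] at h2
      simp only
      linarith
    · intro t
      have hvx : phi p x ε t + C ≤ Finset.univ.inf' ⟨s₀, Finset.mem_univ _⟩
          (fun u => phi p x ε u + C + arcLen p x u (x t) + ε) := by
        apply Finset.le_inf'
        intro u _
        have h := htri u t
        rw [wgt] at h
        linarith
      have h1 : dotp (p t) (x t) - phi p x ε t ≤ C :=
        hC ▸ Finset.le_sup' (f := fun u => dotp (p u) (x u) - phi p x ε u) (Finset.mem_univ t)
      simp only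
      linarith
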